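/- Let d and d' be two metrics on a set X that are Hölder equivalent, i.e., there exist constants C₁, C₂, ν₁, ν₂ > 0 with C₁·d(x,y)^{ν₁} ≤ d'(x,y) ≤ C₂·d(x,y)^{ν₂} for all x,y. Then the associated metrics d_log and d'_log are Lipschitz equivalent. -/
import Mathlib


open scoped Classical

private lemma L_pos {t : ℝ} (ht : 0 < t) :
    Real.log 4 ≤ -Real.log (min t (1/4)) := by
  have h1 : (0:ℝ) < min t (1/4) := lt_min ht (by norm_num)
  have h2 : Real.log (min t (1/4)) ≤ Real.log (1/4) :=
    Real.log_le_log h1 (min_le_right _ _)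
  have h4 : Real.log (1/4) = -Real.log 4 := by
    rw [one_div, Real.log_inv]
  linarith

private lemma L_neg {t : ℝ} (ht : 0 < t) :
    Real.log (min t (1/4)) < 0 := by
  have h4 : (0:ℝ) < Real.log 4 := Real.log_pos (by norm_num)
  have := L_pos ht
  linarith

private lemma nlog_le_L {t : ℝ} (ht : 0 < t) :
    -Real.log t ≤ -Real.log (min t (1/4)) := by
  have h1 : (0:ℝ) < min t (1/4) := lt_min ht (by norm_num)
  have : Real.log (min t (1/4)) ≤ Real.log t :=
    Real.log_le_log h1 (min_le_left _ _)
  linarith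

private lemma key {s t C ν : ℝ} (hs : 0 < s) (ht : 0 < t) (hC : 0 < C) (hν : 0 < ν)
    (h : C * t ^ ν ≤ s) :
    -Real.log (min s (1/4)) ≤
      max (|Real.log C| / Real.log 4 + ν) 1 * (-Real.log (min t (1/4))) := by
  set Lt := -Real.log (min t (1/4)) with hLt
  set Ls := -Real.log (min s (1/4)) with hLs
  set K := max (|Real.log C| / Real.log 4 + ν) 1 with hK
  have h4 : (0:ℝ) < Real.log 4 := Real.log_pos (by norm_num)
  have hLt4 : Real.log 4 ≤ Lt := L_pos ht
  have hnt : -Real.log t ≤ Lt := nlog_le_L ht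
  have hK1 : (1:ℝ) ≤ K := le_max_right _ _
  have hK2 : |Real.log C| / Real.log 4 + ν ≤ K := le_max_left _ _
  have hcases : Ls = -Real.log s ∨ Ls = Real.log 4 := by
    rcases min_cases s (1/4) with ⟨h1, _⟩ | ⟨h1, _⟩
    · left; rw [hLs, h1]
    · right; rw [hLs, h1, one_div, Real.log_inv]; ring
  rcases hcases with hcase | hcase
  · -- Ls = -log s ≤ -log C - ν log t ≤ |log C| + ν Lt
    have hlog_s : Real.log C + ν * Real.log t ≤ Real.log s := by
      have hpos : (0:ℝ) < C * t ^ ν := by positivity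
      have := Real.log_le_log hpos h
      rwa [Real.log_mul (ne_of_gt hC) (by positivity), Real.log_rpow ht] at this
    have h1 : -Real.log s ≤ |Real.log C| + ν * Lt := by
      have habs : -Real.log C ≤ |Real.log C| := neg_le_abs _
      nlinarith [hν.le, hnt]
    have h2 : |Real.log C| ≤ |Real.log C| / Real.log 4 * Lt := by
      rw [div_mul_eq_mul_div, le_div_iff₀ h4]
      have : (0:ℝ) ≤ |Real.log C| := abs_nonneg _
      nlinarith
    have hLtpos : 0 < Lt := lt_of_lt_of_le h4 hLt4
    rw [hcase]
    calc -Real.log s ≤ |Real.log C| + ν * Lt := h1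
      _ ≤ |Real.log C| / Real.log 4 * Lt + ν * Lt := by linarith
      _ = (|Real.log C| / Real.log 4 + ν) * Lt := by ring
      _ ≤ K * Lt := mul_le_mul_of_nonneg_right hK2 hLtpos.le
  · rw [hcase]
    have hLtpos : 0 < Lt := lt_of_lt_of_le h4 hLt4
    nlinarith

/-- If two metrics `d`, `d'` on `X` are Hölder equivalent, then the associated metrics
`d_log` and `d'_log` are Lipschitz equivalent. -/
theorem stmt_5 {X : Type*} (d d' : X → X → ℝ)
    (hd0 : ∀ x y, 0 ≤ d x y) (hd'0 : ∀ x y, 0 ≤ d' x y)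
    (hdiag : ∀ x y : X, d x y = 0 ↔ x = y) (hdiag' : ∀ x y : X, d' x y = 0 ↔ x = y)
    (C₁ C₂ ν₁ ν₂ : ℝ) (hC₁ : 0 < C₁) (hC₂ : 0 < C₂) (hν₁ : 0 < ν₁) (hν₂ : 0 < ν₂)
    (hHolder : ∀ x y : X, C₁ * (d x y) ^ ν₁ ≤ d' x y ∧ d' x y ≤ C₂ * (d x y) ^ ν₂)
    (dlog dlog' : X → X → ℝ)
    (hlog : ∀ x y : X, dlog x y =
      if x = y then 0 else 1 / |Real.log (min (d x y) (1/4))|)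
    (hlog' : ∀ x y : X, dlog' x y =
      if x = y then 0 else 1 / |Real.log (min (d' x y) (1/4))|) :
    ∃ c > (0:ℝ), ∃ c' > (0:ℝ), ∀ x y : X,
      c * dlog x y ≤ dlog' x y ∧ dlog' x y ≤ c' * dlog x y := by
  set K₁ : ℝ := max (|Real.log C₁| / Real.log 4 + ν₁) 1 with hK₁def
  set K₂ : ℝ := max (|Real.log (C₂ ^ (-ν₂⁻¹))| / Real.log 4 + ν₂⁻¹) 1 with hK₂def
  have hK₁pos : 0 < K₁ := lt_of_lt_of_le one_pos (le_max_right _ _)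
  have hK₂pos : 0 < K₂ := lt_of_lt_of_le one_pos (le_max_right _ _)
  refine ⟨K₁⁻¹, inv_pos.mpr hK₁pos, K₂, hK₂pos, fun x y => ?_⟩
  by_cases hxy : x = y
  · simp [hlog, hlog', hxy]
  · have ht : 0 < d x y := lt_of_le_of_ne (hd0 x y) (fun h => hxy ((hdiag x y).mp h.symm))
    have hs : 0 < d' x y := lt_of_le_of_ne (hd'0 x y) (fun h => hxy ((hdiag' x y).mp h.symm))
    set t := d x y
    set s := d' x y
    set Lt := -Real.log (min t (1/4)) with hLtdef
    set Ls := -Real.log (min s (1/4)) with hLsdef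
    have h4 : (0:ℝ) < Real.log 4 := Real.log_pos (by norm_num)
    have hLtpos : 0 < Lt := lt_of_lt_of_le h4 (L_pos ht)
    have hLspos : 0 < Ls := lt_of_lt_of_le h4 (L_pos hs)
    have habsL : |Real.log (min t (1/4))| = Lt := abs_of_neg (L_neg ht)
    have habsL' : |Real.log (min s (1/4))| = Ls := abs_of_neg (L_neg hs)
    have hdl : dlog x y = 1 / Lt := by rw [hlog x y, if_neg hxy, habsL]
    have hdl' : dlog' x y = 1 / Ls := by rw [hlog' x y, if_neg hxy, habsL']
    -- First direction: Ls ≤ K₁ * Lt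
    have hkey1 : Ls ≤ K₁ * Lt := key hs ht hC₁ hν₁ (hHolder x y).1
    -- Second direction: C₂^(-1/ν₂) * s^(1/ν₂) ≤ t, hence Lt ≤ K₂ * Ls
    have hC₂' : 0 < C₂ ^ (-ν₂⁻¹) := Real.rpow_pos_of_pos hC₂ _
    have hν₂' : 0 < ν₂⁻¹ := inv_pos.mpr hν₂
    have hstep : C₂ ^ (-ν₂⁻¹) * s ^ ν₂⁻¹ ≤ t := by
      have h1 : s ^ ν₂⁻¹ ≤ (C₂ * t ^ ν₂) ^ ν₂⁻¹ :=
        Real.rpow_le_rpow hs.le (hHolder x y).2 hν₂'.le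
      have h2 : (C₂ * t ^ ν₂) ^ ν₂⁻¹ = C₂ ^ ν₂⁻¹ * t := by
        rw [Real.mul_rpow hC₂.le (by positivity), ← Real.rpow_mul ht.le,
          mul_inv_cancel₀ (ne_of_gt hν₂), Real.rpow_one]
      have h3 : C₂ ^ (-ν₂⁻¹) * s ^ ν₂⁻¹ ≤ C₂ ^ (-ν₂⁻¹) * (C₂ ^ ν₂⁻¹ * t) := by
        apply mul_le_mul_of_nonneg_left _ hC₂'.le
        rw [h2] at h1; exact h1
      have h4' : C₂ ^ (-ν₂⁻¹) * (C₂ ^ ν₂⁻¹ * t) = t := by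
        rw [← mul_assoc, ← Real.rpow_add hC₂]
        simp
      linarith [h3, h4'.le]
    have hkey2 : Lt ≤ K₂ * Ls := key ht hs hC₂' hν₂' hstep
    constructor
    · rw [hdl, hdl']
      have hone : (1:ℝ)/(K₁*Lt) ≤ 1/Ls := one_div_le_one_div_of_le hLspos hkey1
      calc K₁⁻¹ * (1/Lt) = 1/(K₁*Lt) := by
            field_simp
        _ ≤ 1/Ls := hone
    · rw [hdl, hdl', mul_one_div, div_le_div_iff₀ hLspos hLtpos]
      nlinarith
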